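/- Fix λ > 0, ν > 0, 0 < β < ν, t > 0, μ > 0 and δ > 0. Let f(x) = β δ^β x^{-β-1} 1_{[δ,∞)}(x) be the Pareto density. Then exp{ -λ t δ^{-β} ∫_δ^∞ (1 - e^{-(μx)^ν}) f(x) dx } converges, as δ ↓ 0, to exp{ -λ t μ^β Γ(1 - β/ν) }. Moreover, with δ^{-ν} in place of δ^{-β} in the exponent and the Dirac mass at δ in place of f, exp{ -λ t δ^{-ν} (1 - e^{-(μδ)^ν}) } converges to exp{ -λ t μ^ν } as δ ↓ 0. -/

import Mathlib

open MeasureTheory Set Filter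

lemma cpl_slope : Tendsto (fun u : ℝ => (1 - Real.exp (-u)) / u) (nhdsWithin 0 {0}ᶜ) (nhds 1) := by
  have h : HasDerivAt (fun u : ℝ => 1 - Real.exp (-u)) 1 0 := by
    have := ((Real.hasDerivAt_exp (-0)).comp 0 (hasDerivAt_neg (0:ℝ))).const_sub 1
    simpa using this
  rw [hasDerivAt_iff_tendsto_slope] at h
  refine h.congr fun u => ?_
  rw [slope_def_field]
  simp

lemma cpl_pow_tendsto {c s : ℝ} (hc : 0 < c) (hs : 0 < s) :
    Tendsto (fun x : ℝ => c * x ^ s) (nhdsWithin 0 (Ioi 0)) (nhdsWithin 0 (Ioi 0)) := by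
  apply tendsto_nhdsWithin_of_tendsto_nhds_of_eventually_within
  · have h0 : ContinuousAt (fun x : ℝ => x ^ s) 0 := Real.continuousAt_rpow_const 0 s (Or.inr hs.le)
    have := (h0.tendsto.const_mul c).mono_left (nhdsWithin_le_nhds (s := Ioi (0:ℝ)))
    simpa [Real.zero_rpow hs.ne'] using this
  · filter_upwards [self_mem_nhdsWithin] with x hx
    exact mul_pos hc (Real.rpow_pos_of_pos hx s)

lemma cpl_ratio {c s : ℝ} (hc : 0 < c) (hs : 0 < s) :
    Tendsto (fun x : ℝ => (1 - Real.exp (-(c * x ^ s))) / (c * x ^ s))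
      (nhdsWithin 0 (Ioi 0)) (nhds 1) :=
  cpl_slope.comp ((cpl_pow_tendsto hc hs).mono_right
    (nhdsWithin_mono 0 (fun x hx => by simpa using (ne_of_gt hx))))

lemma cpl_h_integrable {ν β b : ℝ} (hν : 0 < ν) (hβ : 0 < β) (hβν : β < ν) (hb : 0 < b) :
    IntegrableOn (fun x : ℝ => x ^ (ν - β - 1) * Real.exp (-(b * x ^ ν))) (Ioi (0:ℝ)) := by
  have hf : IntegrableOn (fun s : ℝ => |ν|⁻¹ * (s ^ (-β/ν) * Real.exp (-(b * s)))) (Ioi (0:ℝ)) := by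
    apply Integrable.const_mul
    have h1 : (-1:ℝ) < -β/ν := by
      rw [neg_div, neg_lt_neg_iff]
      exact (div_lt_one hν).mpr hβν |>.trans_le le_rfl
    have := integrableOn_rpow_mul_exp_neg_mul_rpow (p := 1) (s := -β/ν) (b := b) h1 one_pos hb
    simpa [Real.rpow_one, neg_mul, IntegrableOn] using this
  have key := (integrableOn_Ioi_comp_rpow_iff
    (fun s : ℝ => |ν|⁻¹ * (s ^ (-β/ν) * Real.exp (-(b * s)))) hν.ne').mpr hf
  refine key.congr_fun (fun x hx => ?_) measurableSet_Ioi
  have hx : (0:ℝ) < x := hx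
  have e1 : (x ^ ν) ^ (-β/ν) = x ^ (-β : ℝ) := by
    rw [← Real.rpow_mul hx.le]
    congr 1
    field_simp
  beta_reduce
  rw [smul_eq_mul, e1, abs_of_pos hν]
  have e2 : x ^ (ν - β - 1) = x ^ (ν - 1) * x ^ (-β : ℝ) := by
    rw [← Real.rpow_add hx]; congr 1; ring
  rw [e2]
  field_simp

lemma cpl_g_cont {μ ν β : ℝ} (hμ : 0 < μ) :
    ContinuousOn (fun x : ℝ => (1 - Real.exp (-((μ*x)^ν))) * (β * x ^ (-β-1))) (Ioi 0) := by
  intro x hx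
  have hx : (0:ℝ) < x := hx
  apply ContinuousAt.continuousWithinAt
  have c1 : ContinuousAt (fun x : ℝ => (μ*x)^ν) x :=
    (Real.continuousAt_rpow_const (μ*x) ν (Or.inl (by positivity))).comp
      ((continuous_const.mul continuous_id).continuousAt)
  have c2 : ContinuousAt (fun x : ℝ => x ^ (-β-1)) x :=
    Real.continuousAt_rpow_const x (-β-1) (Or.inl hx.ne')
  exact ((continuous_const.continuousAt.sub
    (Real.continuous_exp.continuousAt.comp c1.neg)).mul
    (continuous_const.continuousAt.mul c2))

lemma cpl_g_integrable {μ ν β : ℝ} (hμ : 0 < μ) (hν : 0 < ν) (hβ : 0 < β) (hβν : β < ν) :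
    IntegrableOn (fun x : ℝ => (1 - Real.exp (-((μ*x)^ν))) * (β * x ^ (-β-1))) (Ioi (0:ℝ)) := by
  have hcont := cpl_g_cont (ν := ν) (β := β) hμ
  rw [← Ioc_union_Ioi_eq_Ioi (zero_le_one : (0:ℝ) ≤ 1)]
  apply IntegrableOn.union
  · have hbound : IntegrableOn (fun x : ℝ => β * μ^ν * x ^ (ν - β - 1)) (Ioc (0:ℝ) 1) := by
      apply Integrable.const_mul
      have := intervalIntegral.intervalIntegrable_rpow' (a := (0:ℝ)) (b := 1)
        (show (-1:ℝ) < ν - β - 1 by linarith)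
      rwa [intervalIntegrable_iff_integrableOn_Ioc_of_le zero_le_one] at this
    refine Integrable.mono' hbound
      ((hcont.mono Ioc_subset_Ioi_self).aestronglyMeasurable measurableSet_Ioc) ?_
    filter_upwards [ae_restrict_mem measurableSet_Ioc] with x hx
    have hx0 : (0:ℝ) < x := hx.1
    have hu : (0:ℝ) ≤ (μ*x)^ν := Real.rpow_nonneg (by positivity) ν
    have h1 : 0 ≤ 1 - Real.exp (-((μ*x)^ν)) := by
      have : Real.exp (-((μ*x)^ν)) ≤ Real.exp 0 := Real.exp_le_exp.mpr (by linarith)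
      simpa using this
    have h2 : 1 - Real.exp (-((μ*x)^ν)) ≤ (μ*x)^ν := by
      have := Real.add_one_le_exp (-((μ*x)^ν)); linarith
    rw [Real.norm_eq_abs, abs_of_nonneg (mul_nonneg h1 (by positivity))]
    calc (1 - Real.exp (-((μ*x)^ν))) * (β * x ^ (-β-1))
        ≤ (μ*x)^ν * (β * x ^ (-β-1)) :=
          mul_le_mul_of_nonneg_right h2 (by positivity)
      _ = β * μ^ν * x ^ (ν - β - 1) := by
          rw [Real.mul_rpow hμ.le hx0.le,
            show ν - β - 1 = ν + (-β-1) by ring, Real.rpow_add hx0]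
          ring
  · have hbound : IntegrableOn (fun x : ℝ => β * x ^ (-β-1)) (Ioi (1:ℝ)) := by
      apply Integrable.const_mul
      exact integrableOn_Ioi_rpow_of_lt (by linarith) one_pos
    refine Integrable.mono' hbound
      ((hcont.mono (Ioi_subset_Ioi zero_le_one)).aestronglyMeasurable measurableSet_Ioi) ?_
    filter_upwards [ae_restrict_mem measurableSet_Ioi] with x hx
    have hx0 : (0:ℝ) < x := lt_trans one_pos hx
    have hu : (0:ℝ) ≤ (μ*x)^ν := Real.rpow_nonneg (by positivity) ν
    have h1 : 0 ≤ 1 - Real.exp (-((μ*x)^ν)) := by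
      have : Real.exp (-((μ*x)^ν)) ≤ Real.exp 0 := Real.exp_le_exp.mpr (by linarith)
      simpa using this
    rw [Real.norm_eq_abs, abs_of_nonneg (mul_nonneg h1 (by positivity))]
    have h2 : 1 - Real.exp (-((μ*x)^ν)) ≤ 1 := by
      have := Real.exp_nonneg (-((μ*x)^ν)); linarith
    calc (1 - Real.exp (-((μ*x)^ν))) * (β * x ^ (-β-1))
        ≤ 1 * (β * x ^ (-β-1)) := mul_le_mul_of_nonneg_right h2 (by positivity)
      _ = β * x ^ (-β-1) := one_mul _


lemma cpl_integral_g {μ ν β : ℝ} (hμ : 0 < μ) (hν : 0 < ν) (hβ : 0 < β) (hβν : β < ν) :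
    ∫ x in Ioi (0:ℝ), (1 - Real.exp (-((μ*x)^ν))) * (β * x ^ (-β-1)) =
      μ ^ β * Real.Gamma (1 - β/ν) := by
  have hb : (0:ℝ) < μ ^ ν := Real.rpow_pos_of_pos hμ ν
  set g := fun x : ℝ => (1 - Real.exp (-((μ*x)^ν))) * (β * x ^ (-β-1)) with hg
  set h := fun x : ℝ => ν * μ^ν * (x ^ (ν - β - 1) * Real.exp (-(μ^ν * x ^ ν))) with hh
  set K := fun x : ℝ => -((1 - Real.exp (-((μ*x)^ν))) * x ^ (-β)) with hK
  have hgint : IntegrableOn g (Ioi 0) := cpl_g_integrable hμ hν hβ hβν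
  have hhint : IntegrableOn h (Ioi 0) :=
    (cpl_h_integrable hν hβ hβν hb).const_mul (ν * μ^ν)
  have hKderiv : ∀ x ∈ Ioi (0:ℝ), HasDerivAt K (g x - h x) x := by
    intro x hx
    have hx : (0:ℝ) < x := hx
    have dmul : HasDerivAt (fun y : ℝ => μ * y) μ x := by
      simpa using (hasDerivAt_id x).const_mul μ
    have d1 : HasDerivAt (fun y : ℝ => (μ*y)^ν) (ν * (μ*x)^(ν-1) * μ) x :=
      (Real.hasDerivAt_rpow_const (Or.inl (by positivity : μ * x ≠ 0))).comp x dmul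
    have d2 := ((Real.hasDerivAt_exp (-((μ*x)^ν))).comp x d1.neg).const_sub 1
    have d3 : HasDerivAt (fun y : ℝ => y ^ (-β)) (-β * x ^ (-β-1)) x := by
      have := Real.hasDerivAt_rpow_const (x := x) (p := -β) (Or.inl hx.ne')
      simpa [show -β - 1 = -β - 1 by ring] using this
    have d4 := (d2.mul d3).neg
    convert d4 using 1
    case e'_4 => rfl
    case e'_5 => rfl
    case e'_8 => rfl
    simp only [Function.comp_apply, Pi.neg_apply]
    have B : μ ^ (ν-1 : ℝ) * μ = μ ^ ν := by
      rw [← Real.rpow_add_one hμ.ne' (ν-1)]; norm_num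
    have C : x ^ (ν-1 : ℝ) * x ^ (-β) = x ^ (ν-β-1) := by
      rw [← Real.rpow_add hx]; congr 1; ring
    have A : (μ*x)^ν = μ^ν * x^ν := Real.mul_rpow hμ.le hx.le
    have A' : ((μ*x):ℝ)^(ν-1) = μ^(ν-1) * x^(ν-1) := Real.mul_rpow hμ.le hx.le
    rw [hg, hh]
    beta_reduce
    rw [A, A', ← B, ← C]
    ring
  have hKcont : ContinuousWithinAt K (Ici 0) 0 := by
    rw [← continuousWithinAt_Ioi_iff_Ici]
    have hK0 : K 0 = 0 := by
      simp [hK, Real.zero_rpow hν.ne']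
    unfold ContinuousWithinAt
    rw [hK0]
    have T1 := cpl_ratio hb hν
    have T2 : Tendsto (fun x : ℝ => μ^ν * x ^ (ν - β)) (nhdsWithin 0 (Ioi 0)) (nhds 0) :=
      (cpl_pow_tendsto hb (by linarith : (0:ℝ) < ν - β)).mono_right nhdsWithin_le_nhds
    have T3 := (T1.mul T2).neg
    rw [one_mul, neg_zero] at T3
    refine T3.congr' ?_
    filter_upwards [self_mem_nhdsWithin] with x hx
    have hx : (0:ℝ) < x := hx
    have hxν : x ^ ν ≠ 0 := (Real.rpow_pos_of_pos hx ν).ne'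
    have C : x ^ (ν - β : ℝ) = x ^ ν * x ^ (-β) := by
      rw [← Real.rpow_add hx]; congr 1
    show _ = K x
    rw [hK]
    beta_reduce
    rw [Real.mul_rpow hμ.le hx.le, C]
    field_simp
  have hKtop : Tendsto K atTop (nhds 0) := by
    apply squeeze_zero_norm' (a := fun x : ℝ => x ^ (-β))
    · filter_upwards [eventually_ge_atTop (1:ℝ)] with x hx
      have hx0 : (0:ℝ) < x := lt_of_lt_of_le one_pos hx
      have h1 : 0 ≤ 1 - Real.exp (-((μ*x)^ν)) := by
        have : Real.exp (-((μ*x)^ν)) ≤ Real.exp 0 :=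
          Real.exp_le_exp.mpr (neg_nonpos.mpr (Real.rpow_nonneg (by positivity) ν))
        simpa using this
      have h2 : 1 - Real.exp (-((μ*x)^ν)) ≤ 1 := by
        have := Real.exp_nonneg (-((μ*x)^ν)); linarith
      rw [hK]
      beta_reduce
      rw [norm_neg, Real.norm_eq_abs]
      rw [abs_of_nonneg (mul_nonneg h1 (Real.rpow_nonneg hx0.le _))]
      calc (1 - Real.exp (-((μ*x)^ν))) * x ^ (-β)
          ≤ 1 * x ^ (-β) := mul_le_mul_of_nonneg_right h2 (Real.rpow_nonneg hx0.le _)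
        _ = x ^ (-β) := one_mul _
    · exact tendsto_rpow_neg_atTop hβ
  have hK'int : IntegrableOn (fun x => g x - h x) (Ioi (0:ℝ)) := hgint.sub hhint
  have hftc := integral_Ioi_of_hasDerivAt_of_tendsto hKcont hKderiv hK'int hKtop
  have hK0 : K 0 = 0 := by
    simp [hK, Real.zero_rpow hν.ne']
  rw [hK0, sub_zero] at hftc
  have hsub := integral_sub hgint hhint
  rw [hftc] at hsub
  have hgh : ∫ x in Ioi (0:ℝ), g x = ∫ x in Ioi (0:ℝ), h x := by linarith [sub_eq_zero.mp hsub.symm]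
  rw [hgh, hh]
  simp only []
  rw [MeasureTheory.integral_const_mul]
  have hval := integral_rpow_mul_exp_neg_mul_rpow hν
    (show (-1:ℝ) < ν - β - 1 by linarith) hb
  have heq : (∫ x in Ioi (0:ℝ), x ^ (ν - β - 1) * Real.exp (-(μ^ν * x ^ ν))) =
      (μ^ν) ^ (-(ν - β - 1 + 1) / ν) * (1/ν) * Real.Gamma ((ν - β - 1 + 1) / ν) := by
    rw [← hval]
    refine setIntegral_congr_fun measurableSet_Ioi (fun x hx => ?_)
    rw [neg_mul]
  rw [heq]
  have e1 : (μ^ν : ℝ) ^ (-(ν - β - 1 + 1) / ν) = μ ^ (β - ν) := by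
    rw [← Real.rpow_mul hμ.le]
    congr 1
    field_simp
    ring
  have e2 : (ν - β - 1 + 1)/ν = 1 - β/ν := by
    rw [show ν - β - 1 + 1 = ν - β by ring, sub_div, div_self hν.ne']
  have e3 : μ^ν * μ^(β-ν) = μ ^ β := by
    rw [← Real.rpow_add hμ]; congr 1; ring
  rw [e1, e2, ← e3]
  field_simp

theorem compound_poisson_limit_pareto
    (lam ν β t μ : ℝ) (hlam : 0 < lam) (hν : 0 < ν) (hβ : 0 < β) (hβν : β < ν)
    (ht : 0 < t) (hμ : 0 < μ) :
    Tendsto (fun δ : ℝ => Real.exp (-lam * t * δ ^ (-β) *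
        ∫ x in Ioi δ, (1 - Real.exp (-((μ * x) ^ ν))) * (β * δ ^ β * x ^ (-β - 1))))
      (nhdsWithin 0 (Ioi 0))
      (nhds (Real.exp (-lam * t * μ ^ β * Real.Gamma (1 - β / ν)))) ∧
    Tendsto (fun δ : ℝ => Real.exp (-lam * t * δ ^ (-ν) * (1 - Real.exp (-((μ * δ) ^ ν)))))
      (nhdsWithin 0 (Ioi 0))
      (nhds (Real.exp (-lam * t * μ ^ ν))) := by
  have hb : (0:ℝ) < μ ^ ν := Real.rpow_pos_of_pos hμ ν
  constructor
  · -- Part 1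
    set g := fun x : ℝ => (1 - Real.exp (-((μ*x)^ν))) * (β * x ^ (-β-1)) with hg
    have hgint : IntegrableOn g (Ioi 0) := cpl_g_integrable hμ hν hβ hβν
    -- Step B : convergence of the truncated integrals
    have hIoi : Tendsto (fun δ : ℝ => ∫ x in Ioi δ, g x) (nhdsWithin 0 (Ioi 0))
        (nhds (∫ x in Ioi (0:ℝ), g x)) := by
      have key : Tendsto (fun δ : ℝ => ∫ x in Ioi (0:ℝ), (Ioi δ).indicator g x)
          (nhdsWithin 0 (Ioi 0)) (nhds (∫ x in Ioi (0:ℝ), g x)) := by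
        apply tendsto_integral_filter_of_dominated_convergence (fun x => ‖g x‖)
        · filter_upwards with δ
          exact hgint.1.indicator measurableSet_Ioi
        · filter_upwards with δ
          filter_upwards with x
          exact norm_indicator_le_norm_self g x
        · exact hgint.norm
        · filter_upwards [ae_restrict_mem measurableSet_Ioi] with x hx
          apply tendsto_const_nhds.congr'
          filter_upwards [Ioo_mem_nhdsGT_of_mem ⟨le_refl (0:ℝ), hx⟩] with δ hδ
          rw [indicator_of_mem (mem_Ioi.mpr hδ.2) g]
      refine Tendsto.congr' ?_ key
      filter_upwards [self_mem_nhdsWithin] with δ hδ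
      rw [setIntegral_indicator measurableSet_Ioi, Ioi_inter_Ioi,
        max_eq_right (le_of_lt hδ)]
    rw [cpl_integral_g hμ hν hβ hβν] at hIoi
    have hexp : Tendsto (fun δ : ℝ => Real.exp (-lam * t * ∫ x in Ioi δ, g x))
        (nhdsWithin 0 (Ioi 0))
        (nhds (Real.exp (-lam * t * (μ ^ β * Real.Gamma (1 - β/ν))))) :=
      (Real.continuous_exp.tendsto _).comp (hIoi.const_mul (-lam * t))
    have hfin : Tendsto (fun δ : ℝ => Real.exp (-lam * t * δ ^ (-β) *
        ∫ x in Ioi δ, (1 - Real.exp (-((μ * x) ^ ν))) * (β * δ ^ β * x ^ (-β - 1))))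
        (nhdsWithin 0 (Ioi 0))
        (nhds (Real.exp (-lam * t * (μ ^ β * Real.Gamma (1 - β/ν))))) := by
      refine Tendsto.congr' ?_ hexp
      filter_upwards [self_mem_nhdsWithin] with δ hδ
      have hδ0 : (0:ℝ) < δ := hδ
      have hinner : (∫ x in Ioi δ, (1 - Real.exp (-((μ * x) ^ ν))) * (β * δ ^ β * x ^ (-β - 1)))
          = δ ^ β * ∫ x in Ioi δ, g x := by
        rw [← MeasureTheory.integral_const_mul]
        refine setIntegral_congr_fun measurableSet_Ioi (fun x hx => ?_)
        rw [hg]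
        beta_reduce
        ring
      have hcancel : δ ^ (-β) * δ ^ β = 1 := by
        rw [← Real.rpow_add hδ0]
        norm_num
      rw [hinner]
      congr 1
      calc -lam * t * ∫ x in Ioi δ, g x
          = -lam * t * ((δ ^ (-β) * δ ^ β) * ∫ x in Ioi δ, g x) := by rw [hcancel]; ring
        _ = -lam * t * δ ^ (-β) * (δ ^ β * ∫ x in Ioi δ, g x) := by ring
    convert hfin using 2
    ring
  · -- Part 2
    have T1 := (cpl_ratio hb hν).mul_const (μ ^ ν)
    rw [one_mul] at T1
    have T2 : Tendsto (fun δ : ℝ => δ ^ (-ν) * (1 - Real.exp (-((μ*δ)^ν))))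
        (nhdsWithin 0 (Ioi 0)) (nhds (μ ^ ν)) := by
      refine Tendsto.congr' ?_ T1
      filter_upwards [self_mem_nhdsWithin] with δ hδ
      have hδ0 : (0:ℝ) < δ := hδ
      have hδν : δ ^ ν ≠ 0 := (Real.rpow_pos_of_pos hδ0 ν).ne'
      rw [Real.mul_rpow hμ.le hδ0.le, Real.rpow_neg hδ0.le]
      field_simp
    have hexp : Tendsto (fun δ : ℝ => Real.exp (-lam * t *
        (δ ^ (-ν) * (1 - Real.exp (-((μ*δ)^ν)))))) (nhdsWithin 0 (Ioi 0))
        (nhds (Real.exp (-lam * t * μ ^ ν))) :=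
      (Real.continuous_exp.tendsto _).comp (T2.const_mul (-lam * t))
    refine Tendsto.congr (fun δ => ?_) hexp
    congr 1
    ring
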